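/- For 0 < r < 1, ∫_0^{2π} dθ / |1 - r e^{iθ}| ≥ √2 · log(1/(1-r)). -/

import Mathlib

open Complex Real

private lemma normsq_eq (r θ : ℝ) :
    ‖(1 : ℂ) - (r : ℂ) * Complex.exp (θ * Complex.I)‖ ^ 2
      = 1 - 2 * r * Real.cos θ + r ^ 2 := by
  rw [Complex.sq_norm, Complex.normSq_apply]
  simp [Complex.exp_ofReal_mul_I_re, Complex.exp_ofReal_mul_I_im]
  nlinarith [Real.sin_sq_add_cos_sq θ]

private lemma norm_pos (r θ : ℝ) (hr0 : 0 < r) (hr1 : r < 1) :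
    0 < ‖(1 : ℂ) - (r : ℂ) * Complex.exp (θ * Complex.I)‖ := by
  have h := normsq_eq r θ
  have hc : Real.cos θ ≤ 1 := Real.cos_le_one θ
  have hgt : 0 < 1 - 2 * r * Real.cos θ + r ^ 2 := by
    nlinarith [sq_nonneg (1 - r), mul_nonneg hr0.le (sub_nonneg.2 hc)]
  rcases (norm_nonneg ((1 : ℂ) - (r : ℂ) * Complex.exp (θ * Complex.I))).lt_or_eq with h' | h'
  · exact h'
  · exfalso; rw [← h'] at h; simp at h; nlinarith

private lemma norm_le (r θ t : ℝ) (hr0 : 0 ≤ r) (hr1 : r ≤ 1) (ht : 0 ≤ t)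
    (hcos : 1 - Real.cos θ ≤ t ^ 2 / 2) :
    ‖(1 : ℂ) - (r : ℂ) * Complex.exp (θ * Complex.I)‖ ≤ (1 - r) + t := by
  have h := normsq_eq r θ
  nlinarith [norm_nonneg ((1 : ℂ) - (r : ℂ) * Complex.exp (θ * Complex.I)), sq_nonneg t]

/-- For `0 < r < 1`, `∫_0^{2π} dθ/|1 - re^{iθ}| ≥ √2 log(1/(1-r))`. -/
theorem integral_mean_lower_bound
    (r : ℝ) (hr0 : 0 < r) (hr1 : r < 1) :
    Real.sqrt 2 * Real.log (1 / (1 - r)) ≤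
      ∫ θ in (0:ℝ)..(2 * π), 1 / ‖(1 : ℂ) - (r : ℂ) * Complex.exp (θ * Complex.I)‖ := by
  set a : ℝ := 1 - r with ha_def
  have ha : 0 < a := by simp [ha_def]; linarith
  have ha1 : a ≤ 1 := by simp [ha_def]; linarith
  have hπ := Real.pi_pos
  have hπ3 := Real.pi_gt_three
  -- continuity / integrability of the integrand
  have hcont : Continuous fun θ : ℝ =>
      1 / ‖(1 : ℂ) - (r : ℂ) * Complex.exp (θ * Complex.I)‖ := by
    apply Continuous.div continuous_const
    · exact (Continuous.norm (by fun_prop))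
    · intro θ; exact (norm_pos r θ hr0 hr1).ne'
  have hInt : ∀ u v : ℝ, IntervalIntegrable
      (fun θ : ℝ => 1 / ‖(1 : ℂ) - (r : ℂ) * Complex.exp (θ * Complex.I)‖)
      MeasureTheory.volume u v := fun u v => hcont.intervalIntegrable u v
  -- lower bound on [0, π]
  have h1 : Real.log (a + π) - Real.log a ≤
      ∫ θ in (0:ℝ)..π, 1 / ‖(1 : ℂ) - (r : ℂ) * Complex.exp (θ * Complex.I)‖ := by
    have hval : (∫ θ in (0:ℝ)..π, 1 / (a + θ)) = Real.log (a + π) - Real.log a := by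
      have := intervalIntegral.integral_comp_add_left (a := (0:ℝ)) (b := π)
        (fun x : ℝ => 1 / x) a
      rw [this, integral_one_div, Real.log_div (by positivity) (by positivity)]
      · ring_nf
      · intro h
        rw [Set.mem_uIcc] at h
        rcases h with ⟨h1, _⟩ | ⟨_, h2⟩ <;> linarith
    rw [← hval]
    apply intervalIntegral.integral_mono_on (le_of_lt hπ) _ (hInt 0 π)
    · intro θ hθ
      rw [div_le_div_iff₀ (by linarith [hθ.1] : (0:ℝ) < a + θ) (norm_pos r θ hr0 hr1)]
      have hb : ‖(1 : ℂ) - (r : ℂ) * Complex.exp (θ * Complex.I)‖ ≤ a + θ := by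
        apply norm_le r θ θ hr0.le hr1.le hθ.1
        nlinarith [Real.one_sub_sq_div_two_le_cos (x := θ)]
      linarith
    · apply ContinuousOn.intervalIntegrable
      apply ContinuousOn.div continuousOn_const (by fun_prop)
      intro θ hθ
      rw [Set.uIcc_of_le (le_of_lt hπ)] at hθ
      have := hθ.1; positivity
  -- lower bound on [π, 2π]
  have h2 : Real.log (a + π) - Real.log a ≤
      ∫ θ in π..(2*π), 1 / ‖(1 : ℂ) - (r : ℂ) * Complex.exp (θ * Complex.I)‖ := by
    have hval : (∫ θ in π..(2*π), 1 / (a + (2*π - θ))) =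
        Real.log (a + π) - Real.log a := by
      have := intervalIntegral.integral_comp_sub_left (a := π) (b := 2*π)
        (fun x : ℝ => 1 / (a + x)) (2*π)
      rw [this]
      have h2' := intervalIntegral.integral_comp_add_left
        (a := (0:ℝ)) (b := π) (fun x : ℝ => 1 / x) a
      rw [show 2*π - 2*π = (0:ℝ) by ring, show 2*π - π = π by ring]
      rw [h2', integral_one_div, Real.log_div (by positivity) (by positivity)]
      · ring_nf
      · intro h
        rw [Set.mem_uIcc] at h
        rcases h with ⟨h1, _⟩ | ⟨_, h2⟩ <;> simp at * <;> nlinarith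
    rw [← hval]
    apply intervalIntegral.integral_mono_on (by linarith) _ (hInt π (2*π))
    · intro θ hθ
      have ht : 0 ≤ 2*π - θ := by linarith [hθ.2]
      rw [div_le_div_iff₀ (by positivity) (norm_pos r θ hr0 hr1)]
      have hb : ‖(1 : ℂ) - (r : ℂ) * Complex.exp (θ * Complex.I)‖ ≤ a + (2*π - θ) := by
        apply norm_le r θ (2*π - θ) hr0.le hr1.le ht
        have : Real.cos (2*π - θ) = Real.cos θ := Real.cos_two_pi_sub θ
        nlinarith [Real.one_sub_sq_div_two_le_cos (x := 2*π - θ)]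
      linarith
    · apply ContinuousOn.intervalIntegrable
      apply ContinuousOn.div continuousOn_const (by fun_prop)
      intro θ hθ
      rw [Set.uIcc_of_le (by linarith : π ≤ 2*π)] at hθ
      have := hθ.2
      have : 0 < a + (2*π - θ) := by linarith
      positivity
  -- combine
  have hsplit : (∫ θ in (0:ℝ)..(2*π), 1 / ‖(1 : ℂ) - (r : ℂ) * Complex.exp (θ * Complex.I)‖)
      = (∫ θ in (0:ℝ)..π, 1 / ‖(1 : ℂ) - (r : ℂ) * Complex.exp (θ * Complex.I)‖)
      + ∫ θ in π..(2*π), 1 / ‖(1 : ℂ) - (r : ℂ) * Complex.exp (θ * Complex.I)‖ :=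
    (intervalIntegral.integral_add_adjacent_intervals (hInt 0 π) (hInt π (2*π))).symm
  have hlog : Real.log (1 / (1 - r)) = Real.log (1/a) := by rw [ha_def]
  have hlog_nonneg : 0 ≤ Real.log (1/a) := by
    apply Real.log_nonneg
    rw [le_div_iff₀ ha]; linarith
  have hmono : Real.log (1/a) ≤ Real.log (a + π) - Real.log a := by
    rw [Real.log_div one_ne_zero ha.ne', Real.log_one]
    have : (0:ℝ) ≤ Real.log (a + π) := Real.log_nonneg (by linarith)
    linarith
  have hsqrt2 : Real.sqrt 2 ≤ 2 := by
    nlinarith [Real.sq_sqrt (by norm_num : (0:ℝ) ≤ 2), Real.sqrt_nonneg 2]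
  calc Real.sqrt 2 * Real.log (1 / (1 - r))
      ≤ 2 * Real.log (1/a) := by
        rw [hlog]
        exact mul_le_mul_of_nonneg_right hsqrt2 hlog_nonneg
    _ ≤ (Real.log (a + π) - Real.log a) + (Real.log (a + π) - Real.log a) := by linarith
    _ ≤ _ := by rw [hsplit]; exact add_le_add h1 h2
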